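/- Let V be a weighted digraph with φ_{k-1} - φ_k > φ_k - φ_{k+1}, and let M be a marked atom of A_k (an atom containing a root of some minimal-weight spanning k-forest). Then there exists a minimal-weight spanning k-forest one of whose trees has vertex set exactly M, and no minimal-weight spanning k-forest contains an arc with origin in M and terminus outside M. -/

import Mathlib

open Relation

/-- The arc relation of a functional digraph: `F i = some j` means there is an arc `i → j`. -/
def Arc {V : Type*} (F : V → Option V) (i j : V) : Prop := F i = some j

/-- A directed forest: a functional digraph (out-degree ≤ 1) without directed circuits. -/
def IsForest {V : Type*} (F : V → Option V) : Prop :=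
  ∀ i, ¬ Relation.TransGen (Arc F) i i

/-- `j` is accessible from `i` by a directed walk. -/
def Reaches {V : Type*} (F : V → Option V) (i j : V) : Prop :=
  Relation.ReflTransGen (Arc F) i j

open Classical in
/-- The `D`-exchange of `F` by `G`: replace the outgoing arcs (in `F`) of vertices of `D`
by their outgoing arcs in `G`. -/
noncomputable def exchange {V : Type*} (D : Set V) (F G : V → Option V) : V → Option V :=
  fun i => if i ∈ D then G i else F i

/-- The set of vertices of the tree of the forest `F` with root `r`. -/
def treeSet {V : Type*} (F : V → Option V) (r : V) : Set V := {i | Reaches F i r}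

section Weighted

variable {V : Type*} [Fintype V] [DecidableEq V]

/-- A spanning forest of the digraph with arc relation `A`. -/
def IsSpanningForest (A : V → V → Prop) (F : V → Option V) : Prop :=
  IsForest F ∧ ∀ i j, F i = some j → A i j

/-- The number of trees (= roots) of a forest. -/
def numTrees (F : V → Option V) : ℕ :=
  (Finset.univ.filter (fun i => F i = none)).card

/-- The weight of a forest: the sum of the weights of its arcs. -/
noncomputable def weight (w : V → V → ℝ) (F : V → Option V) : ℝ :=
  ∑ i, (F i).elim 0 (w i)

/-- `F` is a minimal-weight (extreme) spanning forest with `k` trees. -/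
def ExtremeForest (A : V → V → Prop) (w : V → V → ℝ) (k : ℕ) (F : V → Option V) : Prop :=
  IsSpanningForest A F ∧ numTrees F = k ∧
    ∀ G, IsSpanningForest A G → numTrees G = k → weight w F ≤ weight w G

/-- `φ_k`: the minimum weight of a spanning forest with exactly `k` trees. -/
noncomputable def phi (A : V → V → Prop) (w : V → V → ℝ) (k : ℕ) : ℝ :=
  sInf (weight w '' {F | IsSpanningForest A F ∧ numTrees F = k})

end Weighted

section Algebras

variable {V : Type*} [Fintype V] [DecidableEq V]

/-- The generating family of `A_k`: vertex sets of trees of minimal-weight spanning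
`k`-forests. -/
def genSets (A : V → V → Prop) (w : V → V → ℝ) (k : ℕ) : Set (Set V) :=
  {S | ∃ F r, ExtremeForest A w k F ∧ F r = none ∧ S = treeSet F r}

/-- The algebra `A_k` of subsets of the vertex set generated by the vertex sets of trees of
minimal-weight spanning `k`-forests. -/
noncomputable def alg (A : V → V → Prop) (w : V → V → ℝ) (k : ℕ) : MeasurableSpace V :=
  MeasurableSpace.generateFrom (genSets A w k)

/-- `E` is an elementary set (atom) of the algebra `m`. -/
def IsElementary (m : MeasurableSpace V) (E : Set V) : Prop :=
  @MeasurableSet V m E ∧ E.Nonempty ∧ ∀ S, @MeasurableSet V m S → S ⊆ E → S = ∅ ∨ S = E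

/-- `i` is a marked vertex of level `k`: a root of some minimal-weight spanning `k`-forest. -/
def IsMarked (A : V → V → Prop) (w : V → V → ℝ) (k : ℕ) (i : V) : Prop :=
  ∃ F, ExtremeForest A w k F ∧ F i = none

end Algebras

section PathLemmas
variable {V : Type*} {F G : V → Option V} {D : Set V}
lemma root_det {i r₁ r₂ : V} (h1 : Reaches F i r₁) :
    Reaches F i r₂ → F r₁ = none → F r₂ = none → r₁ = r₂ := by
  induction h1 using Relation.ReflTransGen.head_induction_on with
  | refl =>
    intro h2 hr1 hr2
    rcases Relation.ReflTransGen.cases_head h2 with rfl | ⟨c, hc, _⟩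
    · rfl
    · rw [Arc, hr1] at hc; cases hc
  | head step tail ih =>
    intro h2 hr1 hr2
    rcases Relation.ReflTransGen.cases_head h2 with rfl | ⟨c, hc, hc2⟩
    · rw [Arc, hr2] at step; cases step
    · rw [Arc] at hc step; rw [step] at hc
      cases hc
      exact ih hc2 hr1 hr2
lemma exists_root [Finite V] (hF : IsForest F) (i : V) :
    ∃ r, F r = none ∧ Reaches F i r := by
  haveI : IsTrans V (fun a b => TransGen (Arc F) b a) :=
    ⟨fun a b c hab hbc => hbc.trans hab⟩
  haveI : IsIrrefl V (fun a b => TransGen (Arc F) b a) := ⟨fun a h => hF a h⟩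
  have wf := Finite.wellFounded_of_trans_of_irrefl (fun a b : V => TransGen (Arc F) b a)
  induction i using WellFounded.induction wf with
  | _ i ih =>
    cases hFi : F i with
    | none => exact ⟨i, hFi, Relation.ReflTransGen.refl⟩
    | some j =>
      obtain ⟨r, hr, hjr⟩ := ih j (Relation.TransGen.single hFi)
      exact ⟨r, hr, Relation.ReflTransGen.head hFi hjr⟩
open Classical in
noncomputable def rootOf (F : V → Option V) (i : V) : V :=
  if h : ∃ r, F r = none ∧ Reaches F i r then h.choose else i
lemma rootOf_spec [Finite V] (hF : IsForest F) (i : V) :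
    F (rootOf F i) = none ∧ Reaches F i (rootOf F i) := by
  have h := exists_root hF i
  rw [rootOf, dif_pos h]
  exact h.choose_spec
lemma rootOf_eq [Finite V] (hF : IsForest F) {i r : V} (hr : F r = none)
    (h : Reaches F i r) : rootOf F i = r :=
  root_det (rootOf_spec hF i).2 h (rootOf_spec hF i).1 hr
lemma mem_treeSet_rootOf [Finite V] (hF : IsForest F) (i : V) :
    i ∈ treeSet F (rootOf F i) := (rootOf_spec hF i).2
lemma root_mem_treeSet {s r : V} (hs : F s = none) (h : s ∈ treeSet F r) : s = r := by
  rcases Relation.ReflTransGen.cases_head h with rfl | ⟨c, hc, _⟩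
  · rfl
  · rw [Arc, hs] at hc; cases hc
lemma treeSet_closed {r i j : V} (hr : F r = none) (hi : i ∈ treeSet F r)
    (hij : F i = some j) : j ∈ treeSet F r := by
  rcases Relation.ReflTransGen.cases_head hi with rfl | ⟨c, hc, hc2⟩
  · rw [hij] at hr; cases hr
  · rw [Arc, hij] at hc; cases hc; exact hc2
lemma treeSet_noentry {r i j : V} (hij : F i = some j) (hj : j ∈ treeSet F r) :
    i ∈ treeSet F r := Relation.ReflTransGen.head hij hj
end PathLemmas
section Exchange
variable {V : Type*} {F G : V → Option V} {D : Set V}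
lemma exchange_mem {i : V} (h : i ∈ D) : exchange D F G i = G i := by
  unfold exchange; rw [if_pos h]
lemma exchange_not_mem {i : V} (h : i ∉ D) : exchange D F G i = F i := by
  unfold exchange; rw [if_neg h]
lemma exchange_compl : exchange Dᶜ G F = exchange D F G := by
  funext i
  by_cases h : i ∈ D
  · rw [exchange_mem h, exchange_not_mem (by simp [h])]
  · rw [exchange_not_mem h, exchange_mem (by simp [h])]
lemma exchange_reach_of_mem (hcl : ∀ i ∈ D, ∀ j, G i = some j → j ∈ D) {a b : V}
    (h : Relation.ReflTransGen (Arc (exchange D F G)) a b) (ha : a ∈ D) :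
    Reaches G a b ∧ b ∈ D := by
  revert ha
  induction h using Relation.ReflTransGen.head_induction_on with
  | refl => exact fun hb => ⟨Relation.ReflTransGen.refl, hb⟩
  | @head a' c' step tail ih =>
    intro ha
    have hGa : G a' = some c' := by rwa [Arc, exchange_mem ha] at step
    have hc : c' ∈ D := hcl a' ha c' hGa
    obtain ⟨h1, h2⟩ := ih hc
    exact ⟨Relation.ReflTransGen.head hGa h1, h2⟩
lemma exchange_reach_of_not_mem (hcl : ∀ i ∈ D, ∀ j, G i = some j → j ∈ D) {a b : V}
    (h : Relation.ReflTransGen (Arc (exchange D F G)) a b) (hb : b ∉ D) :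
    Reaches F a b ∧ a ∉ D := by
  induction h using Relation.ReflTransGen.head_induction_on with
  | refl => exact ⟨Relation.ReflTransGen.refl, hb⟩
  | @head a' c' step tail ih =>
    obtain ⟨h1, h2⟩ := ih
    have ha : a' ∉ D := by
      intro haD
      have hGa : G a' = some c' := by rwa [Arc, exchange_mem haD] at step
      exact h2 (hcl a' haD c' hGa)
    have hFa : F a' = some c' := by rwa [Arc, exchange_not_mem ha] at step
    exact ⟨Relation.ReflTransGen.head hFa h1, ha⟩
lemma isForest_exchange_closed (hF : IsForest F) (hG : IsForest G)
    (hcl : ∀ i ∈ D, ∀ j, G i = some j → j ∈ D) : IsForest (exchange D F G) := by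
  intro c hc
  obtain ⟨y, hcy, hyc⟩ := Relation.TransGen.head'_iff.mp hc
  by_cases hcD : c ∈ D
  · have hGc : G c = some y := by rwa [Arc, exchange_mem hcD] at hcy
    have hy : y ∈ D := hcl c hcD y hGc
    obtain ⟨h1, _⟩ := exchange_reach_of_mem hcl hyc hy
    exact hG c (Relation.TransGen.head' hGc h1)
  · have hFc : F c = some y := by rwa [Arc, exchange_not_mem hcD] at hcy
    obtain ⟨h1, _⟩ := exchange_reach_of_not_mem hcl hyc hcD
    exact hF c (Relation.TransGen.head' hFc h1)
lemma isForest_exchange_noentry (hF : IsForest F) (hG : IsForest G)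
    (hne : ∀ i, i ∉ D → ∀ j, F i = some j → j ∉ D) : IsForest (exchange D F G) := by
  rw [← exchange_compl]
  exact isForest_exchange_closed hG hF (fun i hi j hj => hne i hi j hj)
end Exchange

section Main
variable {V : Type*} [Fintype V] [DecidableEq V]
variable {A : V → V → Prop} {w : V → V → ℝ} {k : ℕ}

lemma phi_le {j : ℕ} {F : V → Option V} (hF : IsSpanningForest A F) (hj : numTrees F = j) :
    phi A w j ≤ weight w F := by
  apply csInf_le
  · exact ((Set.toFinite _).image _).bddBelow
  · exact ⟨F, ⟨hF, hj⟩, rfl⟩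

lemma ExtremeForest.weight_eq {F : V → Option V} (hF : ExtremeForest A w k F) :
    weight w F = phi A w k := by
  refine le_antisymm ?_ (phi_le hF.1 hF.2.1)
  unfold phi
  refine le_csInf ⟨weight w F, F, ⟨hF.1, hF.2.1⟩, rfl⟩ ?_
  rintro b ⟨G, ⟨hG1, hG2⟩, rfl⟩
  exact hF.2.2 G hG1 hG2

lemma extreme_of_weight {F : V → Option V} (h1 : IsSpanningForest A F)
    (h2 : numTrees F = k) (h3 : weight w F = phi A w k) : ExtremeForest A w k F := by
  refine ⟨h1, h2, fun G hG1 hG2 => ?_⟩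
  rw [h3]
  exact phi_le hG1 hG2

lemma isSpanning_exchange {F G : V → Option V} {D : Set V}
    (hF : IsSpanningForest A F) (hG : IsSpanningForest A G)
    (hfor : IsForest (exchange D F G)) : IsSpanningForest A (exchange D F G) := by
  refine ⟨hfor, fun i j hij => ?_⟩
  by_cases h : i ∈ D
  · rw [exchange_mem h] at hij; exact hG.2 i j hij
  · rw [exchange_not_mem h] at hij; exact hF.2 i j hij

lemma numTrees_eq_sum (F : V → Option V) :
    numTrees F = ∑ i, if F i = none then 1 else 0 := Finset.card_filter _ _

lemma weight_exchange_add (F G : V → Option V) (D : Set V) :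
    weight w (exchange D F G) + weight w (exchange D G F) = weight w F + weight w G := by
  unfold weight
  rw [← Finset.sum_add_distrib, ← Finset.sum_add_distrib]
  apply Finset.sum_congr rfl
  intro i _
  by_cases h : i ∈ D
  · simp only [exchange_mem h]; ring
  · simp only [exchange_not_mem h]

lemma numTrees_exchange_add (F G : V → Option V) (D : Set V) :
    numTrees (exchange D F G) + numTrees (exchange D G F) = numTrees F + numTrees G := by
  rw [numTrees_eq_sum, numTrees_eq_sum, numTrees_eq_sum, numTrees_eq_sum,
    ← Finset.sum_add_distrib, ← Finset.sum_add_distrib]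
  apply Finset.sum_congr rfl
  intro i _
  by_cases h : i ∈ D
  · simp only [exchange_mem h]; ring
  · simp only [exchange_not_mem h]
end Main

section Core
variable {V : Type*} [Fintype V] [DecidableEq V]
variable {A : V → V → Prop} {w : V → V → ℝ} {k : ℕ}
variable {H G : V → Option V} {ρ : V}

lemma tree_noentry' (hρ : H ρ = none) :
    ∀ i, i ∉ treeSet H ρ → ∀ j, H i = some j → j ∉ treeSet H ρ :=
  fun i hi j hij hj => hi (treeSet_noentry hij hj)

lemma tree_closed' (hρ : H ρ = none) :
    ∀ i ∈ treeSet H ρ, ∀ j, H i = some j → j ∈ treeSet H ρ :=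
  fun i hi j hij => treeSet_closed hρ hi hij

lemma numTrees_pos (hρ : H ρ = none) : 1 ≤ numTrees H := by
  rw [numTrees]
  exact Finset.card_pos.mpr ⟨ρ, by simp [hρ]⟩

lemma numTrees_exchange_g0 (hρ : H ρ = none)
    (hg : ∀ s ∈ treeSet H ρ, G s ≠ none) :
    numTrees (exchange (treeSet H ρ) H G) = numTrees H - 1 := by
  classical
  have : Finset.univ.filter (fun i => exchange (treeSet H ρ) H G i = none)
      = (Finset.univ.filter (fun i => H i = none)).erase ρ := by
    ext i
    simp only [Finset.mem_erase, Finset.mem_filter, Finset.mem_univ, true_and]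
    constructor
    · intro hi
      by_cases hD : i ∈ treeSet H ρ
      · rw [exchange_mem hD] at hi
        exact absurd hi (hg i hD)
      · rw [exchange_not_mem hD] at hi
        exact ⟨fun h => hD (h ▸ Relation.ReflTransGen.refl), hi⟩
    · rintro ⟨hne, hi⟩
      have hD : i ∉ treeSet H ρ := fun h => hne (root_mem_treeSet hi h)
      rw [exchange_not_mem hD]
      exact hi
  rw [numTrees, this, Finset.card_erase_of_mem (by simp [hρ]), numTrees]

lemma numTrees_exchange_g1 (hρ : H ρ = none) {σ₀ : V} (hσD : σ₀ ∈ treeSet H ρ)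
    (hσG : G σ₀ = none) (huniq : ∀ s ∈ treeSet H ρ, G s = none → s = σ₀) :
    numTrees (exchange (treeSet H ρ) H G) = numTrees H := by
  classical
  have : Finset.univ.filter (fun i => exchange (treeSet H ρ) H G i = none)
      = insert σ₀ ((Finset.univ.filter (fun i => H i = none)).erase ρ) := by
    ext i
    simp only [Finset.mem_insert, Finset.mem_erase, Finset.mem_filter, Finset.mem_univ, true_and]
    constructor
    · intro hi
      by_cases hD : i ∈ treeSet H ρ
      · rw [exchange_mem hD] at hi
        exact Or.inl (huniq i hD hi)
      · rw [exchange_not_mem hD] at hi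
        exact Or.inr ⟨fun h => hD (h ▸ Relation.ReflTransGen.refl), hi⟩
    · rintro (rfl | ⟨hne, hi⟩)
      · rw [exchange_mem hσD]; exact hσG
      · have hD : i ∉ treeSet H ρ := fun h => hne (root_mem_treeSet hi h)
        rw [exchange_not_mem hD]; exact hi
  rw [numTrees, this, Finset.card_insert_of_notMem, Finset.card_erase_of_mem (by simp [hρ])]
  · have := numTrees_pos hρ
    rw [numTrees] at *
    omega
  · simp only [Finset.mem_erase, Finset.mem_filter, Finset.mem_univ, true_and, not_and]
    intro hσρ h
    exact hσρ (root_mem_treeSet h hσD)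

lemma exists_groot_in_tree
    (hlt : phi A w (k - 1) - phi A w k > phi A w k - phi A w (k + 1))
    (hH : ExtremeForest A w k H) (hG : ExtremeForest A w k G) (hρ : H ρ = none) :
    ∃ s ∈ treeSet H ρ, G s = none := by
  by_contra hg
  push_neg at hg
  set D := treeSet H ρ with hD
  have hLf : IsForest (exchange D H G) :=
    isForest_exchange_noentry hH.1.1 hG.1.1 (tree_noentry' hρ)
  have hKf : IsForest (exchange D G H) :=
    isForest_exchange_closed hG.1.1 hH.1.1 (tree_closed' hρ)
  have hLs : IsSpanningForest A (exchange D H G) := isSpanning_exchange hH.1 hG.1 hLf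
  have hKs : IsSpanningForest A (exchange D G H) := isSpanning_exchange hG.1 hH.1 hKf
  have hk1 : 1 ≤ k := hH.2.1 ▸ numTrees_pos hρ
  have hLn : numTrees (exchange D H G) = k - 1 := by
    rw [numTrees_exchange_g0 hρ hg, hH.2.1]
  have hKn : numTrees (exchange D G H) = k + 1 := by
    have h2 := numTrees_exchange_add H G D
    rw [hLn, hH.2.1, hG.2.1] at h2
    omega
  have h1 : phi A w (k - 1) ≤ weight w (exchange D H G) := phi_le hLs hLn
  have h2 : phi A w (k + 1) ≤ weight w (exchange D G H) := phi_le hKs hKn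
  have h3 := weight_exchange_add (w := w) H G D
  rw [hH.weight_eq, hG.weight_eq] at h3
  linarith

lemma groot_unique
    (hlt : phi A w (k - 1) - phi A w k > phi A w k - phi A w (k + 1))
    (hH : ExtremeForest A w k H) (hG : ExtremeForest A w k G) (hρ : H ρ = none)
    {s₁ s₂ : V} (h₁ : s₁ ∈ treeSet H ρ) (hG1 : G s₁ = none)
    (h₂ : s₂ ∈ treeSet H ρ) (hG2 : G s₂ = none) : s₁ = s₂ := by
  classical
  set RG := Finset.univ.filter (fun i => G i = none) with hRG
  set RH := Finset.univ.filter (fun i => H i = none) with hRH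
  have hmem : ∀ s, s ∈ RG → s ∈ RG := fun _ h => h
  have hinj := Finset.inj_on_of_surj_on_of_card_le (s := RG) (t := RH)
    (fun s _ => rootOf H s)
    (fun a ha => by simp [hRH, (rootOf_spec hH.1.1 a).1])
    (fun ρ' hρ' => by
      have hρ'' : H ρ' = none := by simpa [hRH] using hρ'
      obtain ⟨s, hs, hsG⟩ := exists_groot_in_tree hlt hH hG hρ''
      exact ⟨s, by simp [hRG, hsG], rootOf_eq hH.1.1 hρ'' hs⟩)
    (by
      have : RG.card = RH.card := by
        rw [hRG, hRH, ← numTrees, ← numTrees, hH.2.1, hG.2.1]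
      omega)
  have e1 : rootOf H s₁ = ρ := rootOf_eq hH.1.1 hρ h₁
  have e2 : rootOf H s₂ = ρ := rootOf_eq hH.1.1 hρ h₂
  exact hinj (by simp [hRG, hG1]) (by simp [hRG, hG2]) (e1.trans e2.symm)

end Core

section Core2
variable {V : Type*} [Fintype V] [DecidableEq V]
variable {A : V → V → Prop} {w : V → V → ℝ} {k : ℕ}
variable {H G F₀ : V → Option V} {ρ i₀ : V}

lemma exchange_extreme
    (hlt : phi A w (k - 1) - phi A w k > phi A w k - phi A w (k + 1))
    (hH : ExtremeForest A w k H) (hG : ExtremeForest A w k G) (hρ : H ρ = none) :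
    ExtremeForest A w k (exchange (treeSet H ρ) H G) ∧
      ExtremeForest A w k (exchange (treeSet H ρ) G H) := by
  set D := treeSet H ρ with hD
  obtain ⟨σ₀, hσD, hσG⟩ := exists_groot_in_tree hlt hH hG hρ
  have huniq : ∀ s ∈ D, G s = none → s = σ₀ :=
    fun s hs hsG => groot_unique hlt hH hG hρ hs hsG hσD hσG
  have hLf : IsForest (exchange D H G) :=
    isForest_exchange_noentry hH.1.1 hG.1.1 (tree_noentry' hρ)
  have hKf : IsForest (exchange D G H) :=
    isForest_exchange_closed hG.1.1 hH.1.1 (tree_closed' hρ)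
  have hLs : IsSpanningForest A (exchange D H G) := isSpanning_exchange hH.1 hG.1 hLf
  have hKs : IsSpanningForest A (exchange D G H) := isSpanning_exchange hG.1 hH.1 hKf
  have hLn : numTrees (exchange D H G) = k := by
    rw [numTrees_exchange_g1 hρ hσD hσG huniq, hH.2.1]
  have hKn : numTrees (exchange D G H) = k := by
    have h2 := numTrees_exchange_add H G D
    rw [hLn, hH.2.1, hG.2.1] at h2
    omega
  have h1 : phi A w k ≤ weight w (exchange D H G) := phi_le hLs hLn
  have h2 : phi A w k ≤ weight w (exchange D G H) := phi_le hKs hKn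
  have h3 := weight_exchange_add (w := w) H G D
  rw [hH.weight_eq, hG.weight_eq] at h3
  constructor
  · exact extreme_of_weight hLs hLn (by linarith)
  · exact extreme_of_weight hKs hKn (by linarith)

omit [Fintype V] [DecidableEq V] in
/-- first exit of a path from a set -/
lemma first_exit {U : Set V} {a x : V} (h : Reaches G a x) (ha : a ∈ U) (hx : x ∉ U) :
    ∃ y z, y ∈ U ∧ z ∉ U ∧ Arc G y z ∧
      Relation.ReflTransGen (fun p q => Arc G p q ∧ p ∈ U ∧ q ∈ U) a y := by
  revert ha
  induction h using Relation.ReflTransGen.head_induction_on with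
  | refl => intro ha; exact absurd ha hx
  | @head a' c step tail ih =>
    intro ha
    by_cases hc : c ∈ U
    · obtain ⟨y, z, hy, hz, harc, hpath⟩ := ih hc
      exact ⟨y, z, hy, hz, harc, Relation.ReflTransGen.head ⟨step, ha, hc⟩ hpath⟩
    · exact ⟨a', c, ha, hc, step, Relation.ReflTransGen.refl⟩

omit [Fintype V] [DecidableEq V] in
/-- a path of `G` inside `U` is a path of the exchange -/
lemma reach_in_exchange {U : Set V} {a b : V}
    (h : Relation.ReflTransGen (fun p q => Arc G p q ∧ p ∈ U ∧ q ∈ U) a b) :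
    Relation.ReflTransGen (Arc (exchange U H G)) a b := by
  refine Relation.ReflTransGen.mono ?_ a b h
  rintro p q ⟨hpq, hp, _⟩
  rwa [Arc, exchange_mem hp]

omit [Fintype V] [DecidableEq V] in
/-- an `H`-path starting outside the tree `U` is a path of the exchange staying outside -/
lemma reach_outside {U : Set V} (hne : ∀ i, i ∉ U → ∀ j, H i = some j → j ∉ U) {a b : V}
    (h : Reaches H a b) (ha : a ∉ U) :
    Relation.ReflTransGen (Arc (exchange U H G)) a b ∧ b ∉ U := by
  revert ha
  induction h using Relation.ReflTransGen.head_induction_on with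
  | refl => exact fun ha => ⟨Relation.ReflTransGen.refl, ha⟩
  | @head a' c step tail ih =>
    intro ha
    have hc : c ∉ U := hne a' ha c step
    obtain ⟨h1, h2⟩ := ih hc
    refine ⟨Relation.ReflTransGen.head ?_ h1, h2⟩
    rwa [Arc, exchange_not_mem ha]

/-- Path confinement: if `i₀` is marked, then for any extreme `H`, `G`, the whole
`G`-path from `i₀` stays inside the `H`-tree of `i₀`. -/
lemma confine (hlt : phi A w (k - 1) - phi A w k > phi A w k - phi A w (k + 1))
    (hH : ExtremeForest A w k H) (hG : ExtremeForest A w k G)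
    (hF₀ : ExtremeForest A w k F₀) (hi₀m : F₀ i₀ = none)
    (hρ : H ρ = none) (hi₀ : i₀ ∈ treeSet H ρ) :
    ∀ x, Reaches G i₀ x → x ∈ treeSet H ρ := by
  set U := treeSet H ρ with hU
  by_contra hcon
  push_neg at hcon
  obtain ⟨x, hreach, hx⟩ := hcon
  obtain ⟨y, z, hy, hz, harc, hpath⟩ := first_exit hreach hi₀ hx
  set L := exchange U H G with hL
  have hLx : ExtremeForest A w k L := (exchange_extreme hlt hH hG hρ).1
  -- the H-root of z
  set ρz := rootOf H z with hρz
  have hρzspec := rootOf_spec hH.1.1 z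
  have hρz_notU : ρz ∉ U := by
    intro hmem
    have he : ρz = ρ := root_mem_treeSet hρzspec.1 hmem
    have : z ∈ treeSet H ρ := he ▸ hρzspec.2
    exact hz this
  -- i₀ reaches ρz in L
  have hiz : Relation.ReflTransGen (Arc L) i₀ ρz := by
    have h1 : Relation.ReflTransGen (Arc L) i₀ y := reach_in_exchange hpath
    have h2 : Arc L y z := by rwa [Arc, hL, exchange_mem hy]
    have h3 := (reach_outside (G := G) (tree_noentry' hρ) hρzspec.2 hz).1
    exact h1.trans (Relation.ReflTransGen.head h2 h3)
  -- the unique F₀-root of the H-tree of ρz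
  obtain ⟨f, hf, hfF⟩ := exists_groot_in_tree hlt hH hF₀ hρzspec.1
  have hf_notU : f ∉ U := by
    intro hmem
    have : ρz = ρ := root_det hf hmem hρzspec.1 hρ
    exact hρz_notU (this ▸ Relation.ReflTransGen.refl)
  have hfz : Relation.ReflTransGen (Arc L) f ρz :=
    (reach_outside (G := G) (tree_noentry' hρ) hf hf_notU).1
  -- ρz is a root of L
  have hLρz : L ρz = none := by rw [hL, exchange_not_mem hρz_notU]; exact hρzspec.1
  -- two F₀-roots in one tree of L: contradiction
  have : i₀ = f := groot_unique hlt hLx hF₀ hLρz hiz hi₀m hfz hfF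
  exact hf_notU (this ▸ hi₀)

end Core2

section Algebras
variable {V : Type*} [Fintype V] [DecidableEq V]

variable {A : V → V → Prop} {w : V → V → ℝ} {k : ℕ} {M : Set V} {i₀ : V}

lemma atom_subset_gen (hM : IsElementary (alg A w k) M) (hi₀ : i₀ ∈ M)
    {S : Set V} (hS : S ∈ genSets A w k) (hiS : i₀ ∈ S) : M ⊆ S := by
  have hSm : @MeasurableSet V (alg A w k) S := MeasurableSpace.measurableSet_generateFrom hS
  rcases hM.2.2 (M ∩ S) (MeasurableSet.inter hM.1 hSm) Set.inter_subset_left with h | h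
  · exact absurd (Set.mem_inter hi₀ hiS) (h ▸ Set.notMem_empty _)
  · intro x hx
    rw [← h] at hx
    exact hx.2

lemma atom_mem_of_forall (hM : IsElementary (alg A w k) M) (hi₀ : i₀ ∈ M)
    {x : V} (hx : ∀ S ∈ genSets A w k, (i₀ ∈ S ↔ x ∈ S)) : x ∈ M := by
  set N : Set V := {y | ∀ S ∈ genSets A w k, (i₀ ∈ S ↔ y ∈ S)} with hN
  set m' : MeasurableSpace V :=
    { MeasurableSet' := fun W => N ⊆ W ∨ N ∩ W = ∅
      measurableSet_empty := Or.inr (Set.inter_empty N)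
      measurableSet_compl := by
        rintro W (h | h)
        · right
          rw [Set.eq_empty_iff_forall_notMem]
          rintro y ⟨hy1, hy2⟩
          exact hy2 (h hy1)
        · left
          intro y hy
          intro hyW
          exact (Set.eq_empty_iff_forall_notMem.mp h) y ⟨hy, hyW⟩
      measurableSet_iUnion := by
        intro f hf
        by_cases hall : ∃ n, N ⊆ f n
        · obtain ⟨n, hn⟩ := hall
          exact Or.inl (hn.trans (Set.subset_iUnion f n))
        · push_neg at hall
          right
          rw [Set.eq_empty_iff_forall_notMem]
          rintro y ⟨hy1, hy2⟩
          obtain ⟨n, hn⟩ := Set.mem_iUnion.mp hy2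
          rcases hf n with h | h
          · exact hall n h
          · exact (Set.eq_empty_iff_forall_notMem.mp h) y ⟨hy1, hn⟩ } with hm'
  have hle : alg A w k ≤ m' := by
    apply MeasurableSpace.generateFrom_le
    intro S hS
    show N ⊆ S ∨ N ∩ S = ∅
    by_cases hiS : i₀ ∈ S
    · left
      intro y hy
      exact (hy S hS).mp hiS
    · right
      rw [Set.eq_empty_iff_forall_notMem]
      rintro y ⟨hy1, hy2⟩
      exact hiS ((hy1 S hS).mpr hy2)
  have hpM : N ⊆ M ∨ N ∩ M = ∅ := MeasurableSpace.le_def.mp hle M hM.1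
  have hi₀N : i₀ ∈ N := fun S _ => Iff.rfl
  rcases hpM with h | h
  · exact h hx
  · exact absurd (Set.mem_inter hi₀N hi₀) (h ▸ Set.notMem_empty _)

lemma separator (hM : IsElementary (alg A w k) M) (hi₀ : i₀ ∈ M)
    {x : V} (hx : x ∉ M) :
    ∃ Gx r, ExtremeForest A w k Gx ∧ Gx r = none ∧ i₀ ∈ treeSet Gx r ∧ x ∉ treeSet Gx r := by
  by_contra hcon
  push_neg at hcon
  apply hx
  apply atom_mem_of_forall hM hi₀
  rintro S ⟨F, r, hF, hr, rfl⟩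
  constructor
  · intro hiS
    by_contra hxS
    exact hxS (hcon F r hF hr hiS)
  · intro hxS
    set r' := rootOf F i₀ with hr'
    have hspec := rootOf_spec hF.1.1 i₀
    have hxr' : x ∈ treeSet F r' := by
      by_contra hxr'
      exact hxr' (hcon F r' hF hspec.1 hspec.2)
    have : r' = r := root_det hxr' hxS hspec.1 hr
    exact this ▸ hspec.2

end Algebras

section Final
variable {V : Type*} [Fintype V] [DecidableEq V]
variable {A : V → V → Prop} {w : V → V → ℝ} {k : ℕ}
variable {H G F₀ : V → Option V} {ρ i₀ : V} {M : Set V}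

omit [Fintype V] [DecidableEq V] in
lemma reach_restrict {U : Set V} {a b : V} (h : Reaches G a b)
    (hconf : ∀ c, Reaches G a c → c ∈ U) :
    Relation.ReflTransGen (fun p q => Arc G p q ∧ p ∈ U ∧ q ∈ U) a b := by
  revert hconf
  induction h using Relation.ReflTransGen.head_induction_on with
  | refl => exact fun _ => Relation.ReflTransGen.refl
  | @head a' c step tail ih =>
    intro hconf
    have ha' : a' ∈ U := hconf a' Relation.ReflTransGen.refl
    have hc : c ∈ U := hconf c (Relation.ReflTransGen.single step)
    exact Relation.ReflTransGen.head ⟨step, ha', hc⟩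
      (ih (fun d hd => hconf d (Relation.ReflTransGen.head step hd)))

omit [Fintype V] [DecidableEq V] in
lemma exchange_stay_out {U : Set V} (hne : ∀ i, i ∉ U → ∀ j, H i = some j → j ∉ U)
    {a b : V} (h : Relation.ReflTransGen (Arc (exchange U H G)) a b) (ha : a ∉ U) :
    b ∉ U := by
  revert ha
  induction h using Relation.ReflTransGen.head_induction_on with
  | refl => exact id
  | @head a' c step tail ih =>
    intro ha
    have harc : H a' = some c := by rwa [Arc, exchange_not_mem ha] at step
    exact ih (hne a' ha c harc)

omit [Fintype V] [DecidableEq V] in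
lemma exchange_reach_end_in {U : Set V} (hne : ∀ i, i ∉ U → ∀ j, H i = some j → j ∉ U)
    {a b : V} (h : Relation.ReflTransGen (Arc (exchange U H G)) a b) (hb : b ∈ U) :
    Reaches G a b := by
  induction h using Relation.ReflTransGen.head_induction_on with
  | refl => exact Relation.ReflTransGen.refl
  | @head a' c step tail ih =>
    by_cases ha' : a' ∈ U
    · have harc : G a' = some c := by rwa [Arc, exchange_mem ha'] at step
      exact Relation.ReflTransGen.head harc ih
    · have harc : H a' = some c := by rwa [Arc, exchange_not_mem ha'] at step
      exact absurd hb (exchange_stay_out hne tail (hne a' ha' c harc))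

lemma tree_eq_M (hlt : phi A w (k - 1) - phi A w k > phi A w k - phi A w (k + 1))
    (hM : IsElementary (alg A w k) M) (hi₀M : i₀ ∈ M)
    (hF₀ : ExtremeForest A w k F₀) (hi₀m : F₀ i₀ = none) :
    ∃ H ρ, ExtremeForest A w k H ∧ H ρ = none ∧ treeSet H ρ = M := by
  classical
  set NN : Set ℕ := {n | ∃ H ρ, ExtremeForest A w k H ∧ H ρ = none ∧ i₀ ∈ treeSet H ρ ∧
    (treeSet H ρ).ncard = n} with hNN
  have hne : NN.Nonempty :=
    ⟨(treeSet F₀ i₀).ncard, F₀, i₀, hF₀, hi₀m, Relation.ReflTransGen.refl, rfl⟩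
  obtain ⟨H, ρ, hH, hρ, hi₀U, hcard⟩ := Nat.sInf_mem hne
  refine ⟨H, ρ, hH, hρ, ?_⟩
  have hMU : M ⊆ treeSet H ρ :=
    atom_subset_gen hM hi₀M ⟨H, ρ, hH, hρ, rfl⟩ hi₀U
  refine Set.Subset.antisymm ?_ hMU
  intro x hxU
  by_contra hxM
  obtain ⟨G, r, hG, hr, hi₀W, hxW⟩ := separator hM hi₀M hxM
  have conf : ∀ c, Reaches G i₀ c → c ∈ treeSet H ρ :=
    confine hlt hH hG hF₀ hi₀m hρ hi₀U
  have hrU : r ∈ treeSet H ρ := conf r hi₀W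
  set L := exchange (treeSet H ρ) H G with hL
  have hLx : ExtremeForest A w k L := (exchange_extreme hlt hH hG hρ).1
  have hLr : L r = none := by rw [hL, exchange_mem hrU]; exact hr
  have hiL : Reaches L i₀ r := reach_in_exchange (reach_restrict hi₀W conf)
  have hxT : x ∉ treeSet L r := by
    intro hxT
    exact hxW (exchange_reach_end_in (tree_noentry' hρ) hxT hrU)
  have hTU : treeSet L r ⊆ treeSet H ρ := by
    intro v hv
    by_contra hvU
    exact (exchange_stay_out (tree_noentry' hρ) hv hvU) hrU
  have hss : treeSet L r ⊂ treeSet H ρ := ⟨hTU, fun hsub => hxT (hsub hxU)⟩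
  have hlt' : (treeSet L r).ncard < (treeSet H ρ).ncard :=
    Set.ncard_lt_ncard hss (Set.toFinite _)
  have hmemNN : (treeSet L r).ncard ∈ NN := ⟨L, r, hLx, hLr, hiL, rfl⟩
  have := Nat.sInf_le hmemNN
  omega

lemma no_escape (hlt : phi A w (k - 1) - phi A w k > phi A w k - phi A w (k + 1))
    (hM : IsElementary (alg A w k) M) (hi₀M : i₀ ∈ M)
    (hF₀ : ExtremeForest A w k F₀) (hi₀m : F₀ i₀ = none)
    (hH : ExtremeForest A w k H) (hρ : H ρ = none) (hUM : treeSet H ρ = M) :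
    ∀ G, ExtremeForest A w k G → ∀ i ∈ M, ∀ j, Arc G i j → j ∈ M := by
  intro G hG i hiM j hij
  have hi₀U : i₀ ∈ treeSet H ρ := hUM.symm ▸ hi₀M
  have conf : ∀ c, Reaches G i₀ c → c ∈ treeSet H ρ :=
    confine hlt hH hG hF₀ hi₀m hρ hi₀U
  set σ' := rootOf G i₀ with hσ'
  have hspec := rootOf_spec hG.1.1 i₀
  have hσ'U : σ' ∈ treeSet H ρ := conf σ' hspec.2
  set L := exchange (treeSet H ρ) H G with hL
  have hLx : ExtremeForest A w k L := (exchange_extreme hlt hH hG hρ).1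
  have hLσ : L σ' = none := by rw [hL, exchange_mem hσ'U]; exact hspec.1
  have hiL : Reaches L i₀ σ' := reach_in_exchange (reach_restrict hspec.2 conf)
  have hMS : M ⊆ treeSet L σ' :=
    atom_subset_gen hM hi₀M ⟨L, σ', hLx, hLσ, rfl⟩ hiL
  have hiT : Reaches L i σ' := hMS hiM
  have hiU : i ∈ treeSet H ρ := hUM.symm ▸ hiM
  have hLi : L i = some j := by rw [hL, exchange_mem hiU]; exact hij
  rcases Relation.ReflTransGen.cases_head hiT with rfl | ⟨c, harc, hrest⟩
  · rw [hLσ] at hLi; cases hLi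
  · rw [Arc, hLi] at harc
    cases harc
    by_contra hjM
    have hjU : j ∉ treeSet H ρ := fun h => hjM (hUM ▸ h)
    exact (exchange_stay_out (tree_noentry' hρ) hrest hjU) hσ'U

end Final


/-- Under the strict convexity inequality, every marked elementary set `M` of `A_k` is the
vertex set of a tree of some minimal-weight spanning `k`-forest, and no minimal-weight
spanning `k`-forest has an arc coming out of `M`. -/
theorem marked_elementary_is_tree {V : Type*} [Fintype V] [DecidableEq V]
    (A : V → V → Prop) (w : V → V → ℝ) (k : ℕ)
    (hk : 2 ≤ k) (hk' : k + 1 ≤ Fintype.card V)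
    (hEx : ∃ F, IsSpanningForest A F ∧ numTrees F = k - 1)
    (hlt : phi A w (k - 1) - phi A w k > phi A w k - phi A w (k + 1))
    (M : Set V) (hM : IsElementary (alg A w k) M) (hmark : ∃ i ∈ M, IsMarked A w k i) :
    (∃ F, ExtremeForest A w k F ∧ ∃ r, F r = none ∧ treeSet F r = M) ∧
      ∀ F, ExtremeForest A w k F → ∀ i ∈ M, ∀ j, Arc F i j → j ∈ M := by
  obtain ⟨i₀, hi₀M, F₀, hF₀, hi₀m⟩ := hmark
  obtain ⟨H, ρ, hH, hρ, hUM⟩ := tree_eq_M hlt hM hi₀M hF₀ hi₀m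
  exact ⟨⟨H, hH, ρ, hρ, hUM⟩,
    fun F hF i hiM j hij => no_escape hlt hM hi₀M hF₀ hi₀m hH hρ hUM F hF i hiM j hij⟩
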